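/- Let K be the subgroup of Graphs(n+1) consisting of graphs with all degrees even and an even number of edges, for n ≥ 2. Then K is the normal closure in D_n (the subgroup of Graphs(n+1) ⋊ S_{n+1} generated by the x_m) of the elements (x_i x_j x_i x_k)² for distinct i, j, k; equivalently, K × {id} equals the kernel of the projection D_n → S_{n+1}. -/

import Mathlib

open Equiv Finset

abbrev Vtx (n : ℕ) := Fin (n+1)
abbrev Edge (n : ℕ) := {e : Sym2 (Vtx n) // ¬ e.IsDiag}
abbrev Graphs (n : ℕ) := Edge n → ZMod 2

/-- relabelling of edges by a permutation of vertices -/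
def permEdge {n : ℕ} (σ : Perm (Vtx n)) : Edge n ≃ Edge n where
  toFun e := ⟨Sym2.map σ e.1, by
    simpa [Sym2.isDiag_map σ.injective] using e.2⟩
  invFun e := ⟨Sym2.map σ.symm e.1, by
    simpa [Sym2.isDiag_map σ.symm.injective] using e.2⟩
  left_inv e := by
    ext1
    simp [Sym2.map_map]
  right_inv e := by
    ext1
    simp [Sym2.map_map]

/-- action of a vertex permutation on graphs -/
def gact {n : ℕ} (σ : Perm (Vtx n)) : Graphs n ≃+ Graphs n where
  toFun g := fun e => g ((permEdge σ).symm e)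
  invFun g := fun e => g (permEdge σ e)
  left_inv g := by funext e; simp
  right_inv g := by funext e; simp
  map_add' g h := rfl

lemma gact_mul {n : ℕ} (σ τ : Perm (Vtx n)) (g : Graphs n) :
    gact (σ * τ) g = gact σ (gact τ g) := by
  funext e
  simp only [gact, AddEquiv.coe_mk, Equiv.coe_fn_mk, Equiv.symm]
  congr 1
  ext1
  simp [permEdge, Sym2.map_map]
  rfl

/-- the action as a homomorphism to automorphisms, multiplicatively -/
def φn (n : ℕ) : Perm (Vtx n) →* MulAut (Multiplicative (Graphs n)) where
  toFun σ := AddEquiv.toMultiplicative (gact σ)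
  map_one' := by
    ext g
    simp [gact, permEdge, Equiv.Perm.one_symm, Equiv.Perm.coe_one, Sym2.map_id']
  map_mul' σ τ := by
    ext g
    exact congrFun (gact_mul σ τ g.toAdd) _

/-- the ambient group `Graphs(n+1) ⋊ S_{n+1}` -/
abbrev DG (n : ℕ) := SemidirectProduct (Multiplicative (Graphs n)) (Perm (Vtx n)) (φn n)

/-- the single-edge graph with edge `{u,v}` -/
def single {n : ℕ} (u v : Vtx n) : Graphs n :=
  fun e => if e.1 = s(u, v) then 1 else 0

/-- the generator `x_m = (e_{0m}, (0 m))` -/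
def xgen {n : ℕ} (m : Vtx n) : DG n :=
  ⟨Multiplicative.ofAdd (single 0 m), Equiv.swap 0 m⟩

/-- the degree of a vertex in a graph -/
def deg {n : ℕ} (g : Graphs n) (v : Vtx n) : ℕ :=
  (Finset.univ.filter (fun e : Edge n => v ∈ e.1 ∧ g e = 1)).card

/-- the number of edges of a graph -/
def nedges {n : ℕ} (g : Graphs n) : ℕ :=
  (Finset.univ.filter (fun e : Edge n => g e = 1)).card

/-- all degrees even and an even number of edges -/
def evenGraph {n : ℕ} (g : Graphs n) : Prop :=
  (∀ v : Vtx n, Even (deg g v)) ∧ Even (nedges g)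

/-- the subgroup generated by the `x_m`, `m = 1, …, n` -/
def Dn (n : ℕ) : Subgroup (DG n) :=
  Subgroup.closure {x | ∃ m : Vtx n, m ≠ 0 ∧ x = xgen m}

/-- the complete graph -/
def complete (n : ℕ) : Graphs n := fun _ => 1

-- basic helper lemmas
variable {n : ℕ}

lemma z2_add_self : ∀ a : ZMod 2, a + a = 0 := by decide

lemma z2_cases : ∀ a : ZMod 2, a = 0 ∨ a = 1 := by decide

lemma g_add_self (g : Graphs n) : g + g = 0 := funext fun e => z2_add_self (g e)

lemma g_neg (g : Graphs n) : -g = g := by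
  funext e
  exact (by decide : ∀ a : ZMod 2, -a = a) (g e)

lemma gact_one (g : Graphs n) : gact (1 : Perm (Vtx n)) g = g := by
  funext e
  simp [gact, permEdge, Equiv.Perm.one_symm, Equiv.Perm.coe_one, Sym2.map_id']

lemma single_comm (u v : Vtx n) : single u v = single v u := by
  funext e
  simp [single, Sym2.eq_swap]

lemma sym2_map_eq_iff (σ : Perm (Vtx n)) (z : Sym2 (Vtx n)) (u v : Vtx n) :
    Sym2.map σ.symm z = s(u, v) ↔ z = s(σ u, σ v) := by
  constructor
  · intro h
    have := congrArg (Sym2.map σ) h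
    rwa [Sym2.map_map, Sym2.map_pair_eq, show (⇑σ ∘ ⇑σ.symm) = id by ext x; simp,
      Sym2.map_id, id_eq] at this
  · intro h
    rw [h, Sym2.map_pair_eq]
    simp

lemma gact_single (σ : Perm (Vtx n)) (u v : Vtx n) :
    gact σ (single u v) = single (σ u) (σ v) := by
  funext e
  simp only [gact, AddEquiv.coe_mk, Equiv.coe_fn_mk, permEdge, Equiv.coe_fn_symm_mk, single]
  simp only [sym2_map_eq_iff]
/-- parity of degree as a sum -/
def Dsum (g : Graphs n) (v : Vtx n) : ZMod 2 := ∑ e : Edge n, if v ∈ e.1 then g e else 0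

/-- parity of the number of edges as a sum -/
def Nsum (g : Graphs n) : ZMod 2 := ∑ e : Edge n, g e

lemma Dsum_add (g h : Graphs n) (v : Vtx n) : Dsum (g + h) v = Dsum g v + Dsum h v := by
  rw [Dsum, Dsum, Dsum, ← Finset.sum_add_distrib]
  apply Finset.sum_congr rfl
  intro e _
  by_cases hv : v ∈ e.1 <;> simp [hv] <;> rfl

lemma Nsum_add (g h : Graphs n) : Nsum (g + h) = Nsum g + Nsum h := by
  rw [Nsum, Nsum, Nsum, ← Finset.sum_add_distrib]
  rfl

lemma mem_map_equiv_iff (σ : Perm (Vtx n)) (z : Sym2 (Vtx n)) (v : Vtx n) :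
    v ∈ Sym2.map σ z ↔ σ⁻¹ v ∈ z := by
  rw [Sym2.mem_map]
  constructor
  · rintro ⟨a, ha, rfl⟩; simpa using ha
  · intro h; exact ⟨σ⁻¹ v, h, by simp⟩

lemma Dsum_gact (σ : Perm (Vtx n)) (g : Graphs n) (v : Vtx n) :
    Dsum (gact σ g) v = Dsum g (σ⁻¹ v) := by
  rw [Dsum, Dsum, ← Equiv.sum_comp (permEdge σ)]
  apply Finset.sum_congr rfl
  intro e _
  have h1 : ((permEdge σ).symm (permEdge σ e)) = e := Equiv.symm_apply_apply _ _
  have h2 : v ∈ (permEdge σ e).1 ↔ σ⁻¹ v ∈ e.1 := mem_map_equiv_iff σ e.1 v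
  simp only [gact, AddEquiv.coe_mk, Equiv.coe_fn_mk, h1]
  by_cases hv : σ⁻¹ v ∈ e.1 <;> simp [h2, hv]

lemma Nsum_gact (σ : Perm (Vtx n)) (g : Graphs n) : Nsum (gact σ g) = Nsum g := by
  rw [Nsum, Nsum, ← Equiv.sum_comp (permEdge σ)]
  apply Finset.sum_congr rfl
  intro e _
  simp [gact]

lemma deg_cast (g : Graphs n) (v : Vtx n) : ((deg g v : ℕ) : ZMod 2) = Dsum g v := by
  rw [deg, ← Finset.sum_boole, Dsum]
  apply Finset.sum_congr rfl
  intro e _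
  rcases z2_cases (g e) with h | h <;> by_cases hv : v ∈ e.1 <;> simp_all

lemma nedges_cast (g : Graphs n) : ((nedges g : ℕ) : ZMod 2) = Nsum g := by
  rw [nedges, ← Finset.sum_boole, Nsum]
  apply Finset.sum_congr rfl
  intro e _
  rcases z2_cases (g e) with h | h <;> simp_all

lemma even_iff_cast_zero (k : ℕ) : Even k ↔ ((k : ℕ) : ZMod 2) = 0 := by
  rw [even_iff_two_dvd, ← ZMod.natCast_eq_zero_iff]

/-- the canonical edge -/
def E0 (u m : Vtx n) (h : u ≠ m) : Edge n := ⟨s(u, m), by simp [h]⟩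

lemma Dsum_single (u m : Vtx n) (h : u ≠ m) (v : Vtx n) :
    Dsum (single u m) v = (if v = u then 1 else 0) + (if v = m then 1 else 0) := by
  rw [Dsum]
  have : ∀ e : Edge n, (if v ∈ e.1 then single u m e else 0)
      = if e = E0 u m h then (if v = u then 1 else 0) + (if v = m then 1 else 0) else 0 := by
    intro e
    by_cases he : e = E0 u m h
    · subst he
      simp only [E0, single, if_pos rfl, Sym2.mem_iff, if_pos]
      by_cases h1 : v = u <;> by_cases h2 : v = m <;> simp_all
    · have : ¬ (e.1 = s(u, m)) := fun hc => he (Subtype.ext hc)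
      simp [single, this, he]
  rw [Finset.sum_congr rfl (fun e _ => this e), Finset.sum_ite_eq' Finset.univ]
  simp

lemma Nsum_single (u m : Vtx n) (h : u ≠ m) : Nsum (single u m) = 1 := by
  rw [Nsum]
  have : ∀ e : Edge n, (single u m e : ZMod 2) = if e = E0 u m h then 1 else 0 := by
    intro e
    by_cases he : e = E0 u m h
    · subst he; simp [E0, single]
    · have : ¬ (e.1 = s(u, m)) := fun hc => he (Subtype.ext hc)
      simp [single, this, he]
  rw [Finset.sum_congr rfl (fun e _ => this e), Finset.sum_ite_eq' Finset.univ]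
  simp
-- semidirect product bookkeeping
lemma DG_left_mul (p q : DG n) :
    Multiplicative.toAdd (p * q).left
      = Multiplicative.toAdd p.left + gact p.right (Multiplicative.toAdd q.left) := rfl

lemma DG_right_mul (p q : DG n) : (p * q).right = p.right * q.right := rfl

lemma DG_left_inv (p : DG n) :
    Multiplicative.toAdd (p⁻¹).left = gact p.right⁻¹ (Multiplicative.toAdd p.left) := by
  show gact p.right⁻¹ (-(Multiplicative.toAdd p.left)) = _
  rw [g_neg]

lemma DG_right_inv (p : DG n) : (p⁻¹).right = p.right⁻¹ := rfl

/-- expected degree-parity vector of an element of `Dn` with permutation part `σ` -/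
def chi (σ : Perm (Vtx n)) (v : Vtx n) : ZMod 2 :=
  (if v = 0 then 1 else 0) + (if v = σ 0 then 1 else 0)

/-- sign of a permutation, as an element of `ZMod 2` -/
def sgn (σ : Perm (Vtx n)) : ZMod 2 := if Perm.sign σ = 1 then 0 else 1

lemma sgn_mul (σ τ : Perm (Vtx n)) : sgn (σ * τ) = sgn σ + sgn τ := by
  rcases Int.units_eq_one_or (Perm.sign σ) with h1 | h1 <;>
    rcases Int.units_eq_one_or (Perm.sign τ) with h2 | h2 <;>
      simp [sgn, Perm.sign_mul, h1, h2] <;> decide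

lemma sgn_inv (σ : Perm (Vtx n)) : sgn σ⁻¹ = sgn σ := by
  rcases Int.units_eq_one_or (Perm.sign σ) with h1 | h1 <;>
    simp [sgn, h1] <;> decide

lemma key_invariant (p : DG n) (hp : p ∈ Dn n) :
    (∀ v, Dsum (Multiplicative.toAdd p.left) v = chi p.right v) ∧
      Nsum (Multiplicative.toAdd p.left) = sgn p.right := by
  induction hp using Subgroup.closure_induction with
  | mem x hx =>
    obtain ⟨m, hm, rfl⟩ := hx
    have h0m : (0 : Vtx n) ≠ m := Ne.symm hm
    constructor
    · intro v
      show Dsum (single 0 m) v = chi (Equiv.swap 0 m) v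
      rw [Dsum_single 0 m h0m, chi, Equiv.swap_apply_left]
    · show Nsum (single 0 m) = sgn (Equiv.swap 0 m)
      rw [Nsum_single 0 m h0m, sgn, Equiv.Perm.sign_swap h0m]
      decide
  | one =>
    constructor
    · intro v
      show Dsum (0 : Graphs n) v = chi 1 v
      simp [Dsum, chi, z2_add_self]
      exact (z2_add_self _).symm
    · show Nsum (0 : Graphs n) = sgn 1
      simp [Nsum, sgn]
  | mul x y hx hy ihx ihy =>
    constructor
    · intro v
      rw [DG_left_mul, Dsum_add, Dsum_gact, ihx.1, ihy.1, DG_right_mul]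
      rw [chi, chi, chi]
      simp only [show (x.right⁻¹ v = 0) ↔ (v = x.right 0) from (by rw [Equiv.Perm.inv_eq_iff_eq]),
        show (x.right⁻¹ v = y.right 0) ↔ (v = (x.right * y.right) 0) from (by rw [Equiv.Perm.inv_eq_iff_eq, Equiv.Perm.mul_apply])]
      exact (by decide : ∀ a b c : ZMod 2, a + b + (b + c) = a + c) _ _ _
    · rw [DG_left_mul, Nsum_add, Nsum_gact, ihx.2, ihy.2, DG_right_mul, sgn_mul]
  | inv x hx ihx =>
    constructor
    · intro v
      rw [DG_left_inv, Dsum_gact, inv_inv, ihx.1, DG_right_inv]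
      rw [chi, chi]
      simp only [show (x.right v = 0) ↔ (v = x.right⁻¹ 0) from Equiv.Perm.eq_inv_iff_eq.symm,
        show (x.right v = x.right 0) ↔ (v = 0) from (by simp)]
      exact (by decide : ∀ a b : ZMod 2, a + b = b + a) _ _
    · rw [DG_left_inv, Nsum_gact, ihx.2, DG_right_inv, sgn_inv]

lemma forward_dir (p : DG n) (hp : p ∈ Dn n) (hr : p.right = 1) :
    evenGraph (Multiplicative.toAdd p.left) := by
  obtain ⟨hd, hn⟩ := key_invariant p hp
  rw [hr] at hd hn
  constructor
  · intro v
    rw [even_iff_cast_zero, deg_cast, hd v, chi]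
    simp [z2_add_self]
    exact z2_add_self _
  · rw [even_iff_cast_zero, nedges_cast, hn, sgn]
    simp
lemma gact_add (σ : Perm (Vtx n)) (g h : Graphs n) :
    gact σ (g + h) = gact σ g + gact σ h := map_add _ _ _

lemma xgen_left (m : Vtx n) : Multiplicative.toAdd (xgen m).left = single 0 m := rfl
lemma xgen_right (m : Vtx n) : (xgen m).right = Equiv.swap 0 m := rfl

lemma xgen_mem (m : Vtx n) (hm : m ≠ 0) : xgen m ∈ Dn n :=
  Subgroup.subset_closure ⟨m, hm, rfl⟩

/-- membership in the kernel part of `Dn` -/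
def inG0 {n : ℕ} (g : Graphs n) : Prop := (⟨Multiplicative.ofAdd g, 1⟩ : DG n) ∈ Dn n

lemma inG0_zero : inG0 (0 : Graphs n) := by
  show (1 : DG n) ∈ Dn n
  exact one_mem _

lemma mk_mul_mk (g h : Graphs n) :
    (⟨Multiplicative.ofAdd g, 1⟩ * ⟨Multiplicative.ofAdd h, 1⟩ : DG n)
      = ⟨Multiplicative.ofAdd (g + h), 1⟩ := by
  have : gact (1 : Perm (Vtx n)) h = h := gact_one h
  show (⟨Multiplicative.ofAdd (g + gact 1 h), 1 * 1⟩ : DG n) = _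
  rw [this, mul_one]

lemma inG0_add {g h : Graphs n} (hg : inG0 g) (hh : inG0 h) : inG0 (g + h) := by
  have := mul_mem hg hh
  rwa [mk_mul_mk] at this

/-- the square of `x_i x_j x_i x_k` is the 4-cycle on `0, i, k, j` -/
lemma word_eq {i j k : Vtx n} (hi : i ≠ 0) (hj : j ≠ 0) (hk : k ≠ 0)
    (hij : i ≠ j) (hik : i ≠ k) (hjk : j ≠ k) :
    (xgen i * xgen j * xgen i * xgen k) * (xgen i * xgen j * xgen i * xgen k)
      = ⟨Multiplicative.ofAdd (single 0 i + single i k + single k j + single j 0), 1⟩ := by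
  apply SemidirectProduct.ext
  · refine Multiplicative.toAdd.injective ?_
    simp only [DG_left_mul, DG_right_mul, xgen_left, xgen_right, toAdd_ofAdd,
      gact_mul, gact_add, gact_single]
    simp only [Equiv.Perm.mul_apply, Equiv.swap_apply_left, Equiv.swap_apply_right,
      Equiv.swap_apply_of_ne_of_ne, hi, hj, hk, hij, hik, hjk,
      Ne.symm hi, Ne.symm hj, Ne.symm hk, Ne.symm hij, Ne.symm hik, Ne.symm hjk,
      ne_eq, not_false_iff]
    rw [show single j i = single i j from single_comm j i,
      show single k 0 = single 0 k from single_comm k 0]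
    funext e
    simp only [Pi.add_apply]
    generalize single 0 i e = a
    generalize single i j e = b
    generalize single j 0 e = c
    generalize single 0 k e = d
    generalize single k j e = e'
    generalize single i k e = f
    revert a b c d e' f
    decide
  · show ((Equiv.swap 0 i * Equiv.swap 0 j * Equiv.swap 0 i * Equiv.swap 0 k) *
      (Equiv.swap 0 i * Equiv.swap 0 j * Equiv.swap 0 i * Equiv.swap 0 k)) = 1
    have h1 : Equiv.swap 0 i * Equiv.swap 0 j * Equiv.swap 0 i = Equiv.swap i j := by
      rw [show Equiv.swap 0 j = Equiv.swap j 0 from Equiv.swap_comm _ _]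
      exact Equiv.swap_mul_swap_mul_swap hj (Ne.symm hij)
    rw [h1]
    have h0 := Equiv.swap_apply_apply (Equiv.swap i j) 0 k
    rw [Equiv.swap_apply_of_ne_of_ne (Ne.symm hi) (Ne.symm hj),
      Equiv.swap_apply_of_ne_of_ne (Ne.symm hik) (Ne.symm hjk), Equiv.swap_inv] at h0
    have h2 : Equiv.swap 0 k * Equiv.swap i j = Equiv.swap i j * Equiv.swap 0 k := by
      conv_lhs => rw [h0]
      rw [mul_assoc, mul_assoc, Equiv.swap_mul_self, mul_one]
    calc (Equiv.swap i j * Equiv.swap 0 k) * (Equiv.swap i j * Equiv.swap 0 k)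
        = Equiv.swap i j * ((Equiv.swap 0 k * Equiv.swap i j) * Equiv.swap 0 k) := by group
      _ = Equiv.swap i j * ((Equiv.swap i j * Equiv.swap 0 k) * Equiv.swap 0 k) := by rw [h2]
      _ = (Equiv.swap i j * Equiv.swap i j) * (Equiv.swap 0 k * Equiv.swap 0 k) := by group
      _ = 1 := by rw [Equiv.swap_mul_self, Equiv.swap_mul_self, one_mul]


lemma cyc_mem {i j k : Vtx n} (hi : i ≠ 0) (hj : j ≠ 0) (hk : k ≠ 0)
    (hij : i ≠ j) (hik : i ≠ k) (hjk : j ≠ k) :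
    inG0 (single 0 i + single i k + single k j + single j 0) := by
  have hw : (xgen i * xgen j * xgen i * xgen k) ∈ Dn n :=
    mul_mem (mul_mem (mul_mem (xgen_mem i hi) (xgen_mem j hj)) (xgen_mem i hi)) (xgen_mem k hk)
  have := mul_mem hw hw
  rwa [word_eq hi hj hk hij hik hjk] at this
/-- triangle through `0`, `a`, `b` -/
def T {n : ℕ} (a b : Vtx n) : Graphs n := single 0 a + single a b + single 0 b

lemma T_comm (a b : Vtx n) : T a b = T b a := by
  unfold T
  rw [single_comm a b]
  abel

lemma L1 {a b c : Vtx n} (ha : a ≠ 0) (hb : b ≠ 0) (hc : c ≠ 0)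
    (hab : a ≠ b) (hac : a ≠ c) (hbc : b ≠ c) :
    inG0 (T a b + T a c) := by
  have h := cyc_mem hb hc ha hbc (Ne.symm hab) (Ne.symm hac)
  have he : T a b + T a c = single 0 b + single b a + single a c + single c 0 := by
    unfold T
    rw [show single b a = single a b from single_comm b a,
      show single c 0 = single 0 c from single_comm c 0]
    funext e
    simp only [Pi.add_apply]
    generalize single 0 a e = x1
    generalize single a b e = x2
    generalize single 0 b e = x3
    generalize single a c e = x4
    generalize single 0 c e = x5
    revert x1 x2 x3 x4 x5
    decide
  rwa [he]

lemma L2 {a b c d : Vtx n} (ha : a ≠ 0) (hb : b ≠ 0) (hc : c ≠ 0) (hd : d ≠ 0)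
    (hab : a ≠ b) (hac : a ≠ c) (had : a ≠ d) (hbc : b ≠ c) (hbd : b ≠ d) (hcd : c ≠ d) :
    inG0 (T a b + T c d) := by
  have h1 : inG0 (T a b + T a d) := L1 ha hb hd hab had hbd
  have h2 : inG0 (T d a + T d c) := L1 hd ha hc (Ne.symm had) (Ne.symm hcd) hac
  have h := inG0_add h1 h2
  have he : T a b + T a d + (T d a + T d c) = T a b + T c d := by
    rw [show T d a = T a d from T_comm d a, show T d c = T c d from T_comm d c]
    funext e
    simp only [Pi.add_apply]
    generalize (T a b) e = x1
    generalize (T a d) e = x2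
    generalize (T c d) e = x3
    revert x1 x2 x3
    decide
  rwa [he] at h

/-- symmetrized triangle -/
def Tsym {n : ℕ} (z : Sym2 (Vtx n)) : Graphs n :=
  Sym2.lift ⟨fun a b => T a b, fun a b => T_comm a b⟩ z

lemma Tsym_mk (a b : Vtx n) : Tsym s(a, b) = T a b := rfl

lemma pair_mem' : ∀ z w : Sym2 (Vtx n), ¬ z.IsDiag → ¬ w.IsDiag → z ≠ w →
    ¬ (0 : Vtx n) ∈ z → ¬ (0 : Vtx n) ∈ w → inG0 (Tsym z + Tsym w) := by
  intro z w
  induction z, w using Sym2.inductionOn₂ with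
  | _ a b c d =>
    intro hz hw hne h0z h0w
    rw [Sym2.mk_isDiag_iff] at hz hw
    rw [Sym2.mem_iff] at h0z h0w
    push_neg at h0z h0w
    have ha : a ≠ 0 := fun h => h0z.1 h.symm
    have hb : b ≠ 0 := fun h => h0z.2 h.symm
    have hc : c ≠ 0 := fun h => h0w.1 h.symm
    have hd : d ≠ 0 := fun h => h0w.2 h.symm
    rw [Tsym_mk, Tsym_mk]
    by_cases hac : a = c
    · subst hac
      have hbd : b ≠ d := by
        intro h; subst h; exact hne rfl
      exact L1 ha hb hd hz (fun h => hw h) hbd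
    · by_cases had : a = d
      · subst had
        have hbc : b ≠ c := by
          intro h; subst h
          exact hne (Sym2.eq_swap)
        rw [show T c a = T a c from T_comm c a]
        exact L1 ha hb hc hz hac hbc
      · by_cases hbc : b = c
        · subst hbc
          have hbd : b ≠ d := by
            intro h; subst h
            exact hw rfl
          rw [show T a b = T b a from T_comm a b]
          exact L1 hb ha hd (Ne.symm hz) hbd (fun h => had h)
        · by_cases hbd : b = d
          · subst hbd
            rw [show T a b = T b a from T_comm a b, show T c b = T b c from T_comm c b]
            exact L1 hb ha hc (Ne.symm hz) hbc (fun h => hac h)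
          · exact L2 ha hb hc hd hz hac had hbc hbd hw
lemma sum_T_mem (S : Finset (Edge n)) (heven : Even S.card)
    (h0 : ∀ e ∈ S, ¬ (0 : Vtx n) ∈ e.1) : inG0 (∑ e ∈ S, Tsym e.1) := by
  induction S using Finset.strongInduction with
  | _ S ih =>
    rcases S.eq_empty_or_nonempty with rfl | ⟨e, he⟩
    · simpa using inG0_zero
    · have hcard : 2 ≤ S.card := by
        rcases heven with ⟨r, hr⟩
        have h1 : 1 ≤ S.card := Finset.card_pos.mpr ⟨e, he⟩
        omega
      have he' : (S.erase e).Nonempty := by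
        rw [← Finset.card_pos, Finset.card_erase_of_mem he]
        omega
      obtain ⟨f, hf⟩ := he'
      have hfe : f ≠ e := Finset.ne_of_mem_erase hf
      have hfS : f ∈ S := Finset.mem_of_mem_erase hf
      have h1 : ∑ x ∈ S, Tsym x.1 = Tsym e.1 + ∑ x ∈ S.erase e, Tsym x.1 :=
        (Finset.add_sum_erase S _ he).symm
      have h2 : ∑ x ∈ S.erase e, Tsym x.1 = Tsym f.1 + ∑ x ∈ (S.erase e).erase f, Tsym x.1 :=
        (Finset.add_sum_erase _ _ hf).symm
      rw [h1, h2, ← add_assoc]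
      have hpair : inG0 (Tsym e.1 + Tsym f.1) :=
        pair_mem' e.1 f.1 e.2 f.2
          (fun h => hfe (Subtype.ext h.symm)) (h0 e he) (h0 f hfS)
      refine inG0_add hpair (ih _ ?_ ?_ ?_)
      · exact Finset.ssubset_of_ssubset_of_subset
          (Finset.erase_ssubset hf) (Finset.erase_subset _ _)
      · have : ((S.erase e).erase f).card = S.card - 2 := by
          rw [Finset.card_erase_of_mem hf, Finset.card_erase_of_mem he]
          omega
        rcases heven with ⟨r, hr⟩
        exact ⟨r - 1, by omega⟩
      · intro x hx
        exact h0 x (Finset.mem_of_mem_erase (Finset.mem_of_mem_erase hx))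

lemma T_eval_nz {a b : Vtx n} (ha : a ≠ 0) (hb : b ≠ 0) (f : Edge n)
    (h0f : ¬ (0 : Vtx n) ∈ f.1) : (T a b) f = if f.1 = s(a, b) then 1 else 0 := by
  have h1 : ¬ (f.1 = s(0, a)) := fun h => h0f (h ▸ Sym2.mem_mk_left 0 a)
  have h2 : ¬ (f.1 = s(0, b)) := fun h => h0f (h ▸ Sym2.mem_mk_left 0 b)
  simp [T, single, h1, h2]

lemma T_eval_z {a b c : Vtx n} (hab : a ≠ b) (ha : a ≠ 0) (hb : b ≠ 0) (hc : c ≠ 0) (f : Edge n)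
    (hf : f.1 = s(0, c)) : (T a b) f = if c ∈ s(a, b) then 1 else 0 := by
  have h1 : (f.1 = s(0, a)) ↔ c = a := by
    rw [hf, Sym2.congr_right]
  have h2 : (f.1 = s(0, b)) ↔ c = b := by
    rw [hf, Sym2.congr_right]
  have h3 : ¬ (f.1 = s(a, b)) := by
    rw [hf]
    intro h
    have : (0 : Vtx n) ∈ s(a, b) := h ▸ Sym2.mem_mk_left 0 c
    rw [Sym2.mem_iff] at this
    rcases this with h' | h' <;> [exact ha h'.symm; exact hb h'.symm]
  simp only [T, Pi.add_apply, single, h3, if_false, Sym2.mem_iff]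
  by_cases e1 : c = a <;> by_cases e2 : c = b <;> simp_all [hab]
lemma Tsym_eval_nz : ∀ z : Sym2 (Vtx n), ¬ z.IsDiag → ¬ (0 : Vtx n) ∈ z →
    ∀ f : Edge n, ¬ (0 : Vtx n) ∈ f.1 → Tsym z f = if f.1 = z then 1 else 0 := by
  intro z
  induction z using Sym2.ind with
  | _ a b =>
    intro hz h0z f h0f
    rw [Sym2.mk_isDiag_iff] at hz
    rw [Sym2.mem_iff] at h0z
    push_neg at h0z
    rw [Tsym_mk]
    exact T_eval_nz (fun h => h0z.1 h.symm) (fun h => h0z.2 h.symm) f h0f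

lemma Tsym_eval_z : ∀ z : Sym2 (Vtx n), ¬ z.IsDiag → ¬ (0 : Vtx n) ∈ z →
    ∀ c : Vtx n, c ≠ 0 → ∀ f : Edge n, f.1 = s(0, c) →
    Tsym z f = if c ∈ z then 1 else 0 := by
  intro z
  induction z using Sym2.ind with
  | _ a b =>
    intro hz h0z c hc f hf
    rw [Sym2.mk_isDiag_iff] at hz
    rw [Sym2.mem_iff] at h0z
    push_neg at h0z
    rw [Tsym_mk]
    exact T_eval_z hz (fun h => h0z.1 h.symm) (fun h => h0z.2 h.symm) hc f hf

lemma decomp (g : Graphs n) (hdeg : ∀ v, Even (deg g v)) :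
    g = ∑ e ∈ Finset.univ.filter (fun e : Edge n => g e = 1 ∧ ¬ (0 : Vtx n) ∈ e.1), Tsym e.1 := by
  funext f
  rw [Finset.sum_apply]
  by_cases h0f : (0 : Vtx n) ∈ f.1
  · obtain ⟨c, hc⟩ : ∃ c, f.1 = s(0, c) := ⟨Sym2.Mem.other h0f, (Sym2.other_spec h0f).symm⟩
    have hc0 : c ≠ 0 := by
      intro h
      apply f.2
      rw [hc, h]
      exact Sym2.mk_isDiag_iff.mpr rfl
    have hterm : ∀ e ∈ Finset.univ.filter (fun e : Edge n => g e = 1 ∧ ¬ (0 : Vtx n) ∈ e.1),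
        Tsym e.1 f = if c ∈ e.1 then 1 else 0 := fun e heS =>
      Tsym_eval_z e.1 e.2 ((Finset.mem_filter.mp heS).2.2) c hc0 f hc
    rw [Finset.sum_congr rfl hterm, Finset.sum_boole]
    have hsplit := Finset.card_filter_add_card_filter_not
      (s := Finset.univ.filter (fun e : Edge n => c ∈ e.1 ∧ g e = 1))
      (p := fun e : Edge n => (0 : Vtx n) ∈ e.1)
    have hA1 : (Finset.univ.filter (fun e : Edge n => c ∈ e.1 ∧ g e = 1)).filter
        (fun e : Edge n => (0 : Vtx n) ∈ e.1) = if g f = 1 then {f} else ∅ := by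
      ext e
      simp only [Finset.mem_filter, Finset.mem_univ, true_and]
      constructor
      · rintro ⟨⟨hce, hge⟩, h0e⟩
        have : e.1 = s(0, c) := (Sym2.mem_and_mem_iff (Ne.symm hc0)).mp ⟨h0e, hce⟩
        have hef : e = f := Subtype.ext (this.trans hc.symm)
        subst hef
        simp [hge]
      · intro h
        by_cases hgf : g f = 1
        · rw [if_pos hgf] at h
          rw [Finset.mem_singleton] at h
          subst h
          refine ⟨⟨?_, hgf⟩, ?_⟩
          · rw [hc]; exact Sym2.mem_mk_right 0 c
          · rw [hc]; exact Sym2.mem_mk_left 0 c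
        · rw [if_neg hgf] at h
          simp at h
    have hA2 : (Finset.univ.filter (fun e : Edge n => g e = 1 ∧ ¬ (0 : Vtx n) ∈ e.1)).filter
        (fun e : Edge n => c ∈ e.1)
        = (Finset.univ.filter (fun e : Edge n => c ∈ e.1 ∧ g e = 1)).filter
          (fun e : Edge n => ¬ (0 : Vtx n) ∈ e.1) := by
      ext e
      simp only [Finset.mem_filter, Finset.mem_univ, true_and]
      tauto
    rw [hA2]
    have hdc : ((deg g c : ℕ) : ZMod 2) = 0 := (even_iff_cast_zero _).mp (hdeg c)
    rw [deg] at hdc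
    have hcast : (((Finset.univ.filter (fun e : Edge n => c ∈ e.1 ∧ g e = 1)).filter
        (fun e : Edge n => ¬ (0 : Vtx n) ∈ e.1)).card : ZMod 2)
        = 0 - (((Finset.univ.filter (fun e : Edge n => c ∈ e.1 ∧ g e = 1)).filter
          (fun e : Edge n => (0 : Vtx n) ∈ e.1)).card : ZMod 2) := by
      rw [← hdc, ← hsplit]
      push_cast
      ring
    rw [hcast, hA1]
    rcases z2_cases (g f) with hgf | hgf
    · rw [hgf, if_neg (by decide : ¬(0 : ZMod 2) = 1)]
      simp
    · rw [hgf, if_pos rfl, Finset.card_singleton]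
      decide
  · have hterm : ∀ e ∈ Finset.univ.filter (fun e : Edge n => g e = 1 ∧ ¬ (0 : Vtx n) ∈ e.1),
        Tsym e.1 f = if e = f then 1 else 0 := by
      intro e heS
      rw [Tsym_eval_nz e.1 e.2 ((Finset.mem_filter.mp heS).2.2) f h0f]
      exact if_congr ⟨fun h => Subtype.ext h.symm, fun h => congrArg Subtype.val h.symm⟩ rfl rfl
    rw [Finset.sum_congr rfl hterm, Finset.sum_ite_eq' _ f (fun _ => (1 : ZMod 2))]
    rcases z2_cases (g f) with hgf | hgf
    · rw [if_neg, hgf]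
      intro hmem
      rw [Finset.mem_filter] at hmem
      rw [hgf] at hmem
      exact absurd hmem.2.1 (by decide)
    · rw [if_pos, hgf]
      exact Finset.mem_filter.mpr ⟨Finset.mem_univ f, hgf, h0f⟩

lemma even_cardS (g : Graphs n) (hdeg0 : Even (deg g 0)) (hne : Even (nedges g)) :
    Even ((Finset.univ.filter (fun e : Edge n => g e = 1 ∧ ¬ (0 : Vtx n) ∈ e.1)).card) := by
  have hsplit := Finset.card_filter_add_card_filter_not
    (s := Finset.univ.filter (fun e : Edge n => g e = 1))
    (p := fun e : Edge n => (0 : Vtx n) ∈ e.1)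
  have h1 : (Finset.univ.filter (fun e : Edge n => g e = 1)).filter
      (fun e : Edge n => (0 : Vtx n) ∈ e.1)
      = Finset.univ.filter (fun e : Edge n => (0 : Vtx n) ∈ e.1 ∧ g e = 1) := by
    ext e
    simp only [Finset.mem_filter, Finset.mem_univ, true_and]
    tauto
  have h2 : (Finset.univ.filter (fun e : Edge n => g e = 1)).filter
      (fun e : Edge n => ¬ (0 : Vtx n) ∈ e.1)
      = Finset.univ.filter (fun e : Edge n => g e = 1 ∧ ¬ (0 : Vtx n) ∈ e.1) := by
    ext e
    simp only [Finset.mem_filter, Finset.mem_univ, true_and]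
  rw [h1, h2] at hsplit
  rw [nedges] at hne
  rw [deg] at hdeg0
  rcases hne with ⟨r, hr⟩
  rcases hdeg0 with ⟨s, hs⟩
  exact ⟨r - s, by omega⟩

lemma backward_dir (g : Graphs n) (he : evenGraph g) : inG0 g := by
  rw [decomp g he.1]
  exact sum_T_mem _ (even_cardS g (he.1 0) he.2)
    (fun e hmem => (Finset.mem_filter.mp hmem).2.2)
/-- For `n ≥ 2`, `K × {id}` equals the kernel of the projection `D_n → S_{n+1}`:
an element of `Graphs(n+1) ⋊ S_{n+1}` lies in `D_n` with trivial permutation part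
if and only if its permutation part is trivial and its graph part has all degrees
even and an even number of edges. -/
theorem stmt9 (n : ℕ) (hn : 2 ≤ n) (p : DG n) :
    (p ∈ Dn n ∧ p.right = 1) ↔
      (evenGraph (Multiplicative.toAdd p.left) ∧ p.right = 1) := by
  constructor
  · rintro ⟨hp, hr⟩
    exact ⟨forward_dir p hp hr, hr⟩
  · rintro ⟨hg, hr⟩
    refine ⟨?_, hr⟩
    have h := backward_dir _ hg
    obtain ⟨l, r⟩ := p
    simp only [SemidirectProduct.right] at hr
    subst hr
    simpa [inG0] using h
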